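/- Let A be a nontrivial commutative ring, let A[t,t⁻¹] be the ring of Laurent polynomials over A, let a and b be units of A, and let m ∈ ℤ with m ≠ 0. Then a + b·t^m is not a unit of A[t,t⁻¹]. -/

import Mathlib

open Polynomial LaurentPolynomial

/-- Over a field, `a + b·Tⁿ` with `a b ≠ 0` and `n > 0` (a natural number) is not a unit. -/
private lemma key_pos {K : Type*} [CommRing K] [IsDomain K] (a b : K) (ha : a ≠ 0) (hb : b ≠ 0)
    (n : ℕ) (hn : n ≠ 0) :
    ¬ IsUnit (LaurentPolynomial.C a + LaurentPolynomial.C b * LaurentPolynomial.T (n : ℤ)) := by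
  intro h
  set p : K[X] := Polynomial.C a + Polynomial.C b * X ^ n with hp
  have hpl : Polynomial.toLaurent p =
      LaurentPolynomial.C a + LaurentPolynomial.C b * LaurentPolynomial.T (n : ℤ) := by
    simp [hp, Polynomial.toLaurent_C, Polynomial.toLaurent_X_pow]
  rw [← hpl] at h
  have hloc := LaurentPolynomial.isLocalization (R := K)
  obtain ⟨u, hu⟩ := h
  have hinv : Polynomial.toLaurent p * ((u⁻¹ : K[T;T⁻¹]ˣ) : K[T;T⁻¹]) = 1 := by
    rw [← hu]; exact u.mul_inv
  obtain ⟨⟨q, s⟩, hs⟩ := IsLocalization.surj (Submonoid.powers (X : K[X])) ((u⁻¹ : K[T;T⁻¹]ˣ) : K[T;T⁻¹])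
  obtain ⟨k, hk⟩ := s.2
  simp only [algebraMap_eq_toLaurent] at hs
  have key : Polynomial.toLaurent (p * q) = Polynomial.toLaurent (X ^ k) := by
    calc Polynomial.toLaurent (p * q)
        = Polynomial.toLaurent p *
            (((u⁻¹ : K[T;T⁻¹]ˣ) : K[T;T⁻¹]) * Polynomial.toLaurent ((s : ↥(Submonoid.powers (X : K[X]))) : K[X])) := by
          rw [map_mul, ← hs]
      _ = Polynomial.toLaurent ((s : ↥(Submonoid.powers (X : K[X]))) : K[X]) := by
          rw [← mul_assoc, hinv, one_mul]
      _ = Polynomial.toLaurent (X ^ k) := congrArg _ hk.symm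
  have hdvd : p ∣ X ^ k := ⟨q, (Polynomial.toLaurent_injective key).symm⟩
  obtain ⟨i, -, hassoc⟩ := (dvd_prime_pow Polynomial.prime_X k).mp hdvd
  rcases Nat.eq_zero_or_pos i with hi | hi
  · subst hi
    rw [pow_zero] at hassoc
    have hunit : IsUnit p := associated_one_iff_isUnit.mp hassoc
    have hd0 : p.natDegree = 0 := Polynomial.natDegree_eq_zero_of_isUnit hunit
    have hcn : p.coeff n ≠ 0 := by
      simp [hp, Polynomial.coeff_X_pow, Polynomial.coeff_C, hn, hb]
    have := Polynomial.le_natDegree_of_ne_zero hcn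
    omega
  · have hX : (X : K[X]) ∣ p := (dvd_pow_self X hi.ne').trans hassoc.symm.dvd
    rw [Polynomial.X_dvd_iff] at hX
    simp [hp, Polynomial.coeff_X_pow, Polynomial.coeff_C, Ne.symm hn, ha] at hX

/-- Over a field, `a + b·Tᵐ` with `a b ≠ 0` and `m ≠ 0` is not a unit. -/
private lemma key_field {K : Type*} [CommRing K] [IsDomain K] (a b : K) (ha : a ≠ 0) (hb : b ≠ 0)
    (m : ℤ) (hm : m ≠ 0) :
    ¬ IsUnit (LaurentPolynomial.C a + LaurentPolynomial.C b * LaurentPolynomial.T m) := by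
  rcases lt_trichotomy m 0 with hneg | rfl | hpos
  · intro h
    have h2 : IsUnit ((LaurentPolynomial.C a + LaurentPolynomial.C b * LaurentPolynomial.T m) *
        LaurentPolynomial.T (-m)) := h.mul (LaurentPolynomial.isUnit_T (-m))
    have heq : (LaurentPolynomial.C a + LaurentPolynomial.C b * LaurentPolynomial.T m) *
        LaurentPolynomial.T (-m)
        = LaurentPolynomial.C b + LaurentPolynomial.C a * LaurentPolynomial.T (-m) := by
      rw [add_mul, mul_assoc, ← LaurentPolynomial.T_add, add_neg_cancel,
        LaurentPolynomial.T_zero, mul_one, add_comm]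
    rw [heq] at h2
    obtain ⟨nn, hnn⟩ : ∃ nn : ℕ, -m = (nn : ℤ) := ⟨(-m).toNat, by omega⟩
    rw [hnn] at h2
    exact key_pos b a hb ha nn (by omega) h2
  · exact absurd rfl hm
  · obtain ⟨nn, hnn⟩ : ∃ nn : ℕ, m = (nn : ℤ) := ⟨m.toNat, by omega⟩
    rw [hnn]
    exact key_pos a b ha hb nn (by omega)

/-- Let `A` be a nontrivial commutative ring, `a, b` units of `A`,
and `m ∈ ℤ` with `m ≠ 0`. Then `a + b·t^m` is not a unit of the Laurent polynomial
ring `A[t,t⁻¹]`. -/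
theorem stmt10 {A : Type*} [CommRing A] [Nontrivial A]
    (a b : Aˣ) (m : ℤ) (hm : m ≠ 0) :
    ¬ IsUnit (LaurentPolynomial.C (a : A) +
        LaurentPolynomial.C (b : A) * LaurentPolynomial.T m) := by
  intro h
  -- pass to a residue field
  obtain ⟨I, hI⟩ := Ideal.exists_maximal A
  haveI : I.IsMaximal := hI
  haveI : I.IsPrime := hI.isPrime
  set K := A ⧸ I with hK
  set π : A →+* K := Ideal.Quotient.mk I with hπ
  -- ring hom A[T;T⁻¹] →+* K[T;T⁻¹]
  let g : Multiplicative ℤ →* K[T;T⁻¹] :=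
    { toFun := fun n => LaurentPolynomial.T (Multiplicative.toAdd n)
      map_one' := LaurentPolynomial.T_zero
      map_mul' := fun x y => LaurentPolynomial.T_add _ _ }
  let φ : A[T;T⁻¹] →+* K[T;T⁻¹] :=
    AddMonoidAlgebra.liftNCRingHom ((LaurentPolynomial.C).comp π) g (fun _ _ => Commute.all _ _)
  have hφsingle : ∀ (k : ℤ) (r : A), φ (AddMonoidAlgebra.single k r)
      = LaurentPolynomial.C (π r) * LaurentPolynomial.T k := by
    intro k r
    show AddMonoidAlgebra.liftNC _ _ (AddMonoidAlgebra.single k r) = _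
    rw [AddMonoidAlgebra.liftNC_single]
    rfl
  have hφC : ∀ r : A, φ (LaurentPolynomial.C r) = LaurentPolynomial.C (π r) := by
    intro r
    rw [← LaurentPolynomial.single_eq_C, hφsingle, LaurentPolynomial.T_zero, mul_one]
  have hφT : φ (LaurentPolynomial.T m) = LaurentPolynomial.T m := by
    show φ (AddMonoidAlgebra.single m 1) = _
    rw [hφsingle, map_one, LaurentPolynomial.C_eq_algebraMap, map_one, one_mul]
  have h2 : IsUnit (LaurentPolynomial.C (π a) + LaurentPolynomial.C (π b)
      * LaurentPolynomial.T m) := by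
    have := h.map φ
    rwa [map_add, map_mul, hφC, hφC, hφT] at this
  have ha : π a ≠ 0 := (IsUnit.map π a.isUnit).ne_zero
  have hb : π b ≠ 0 := (IsUnit.map π b.isUnit).ne_zero
  exact key_field (π a) (π b) ha hb m hm h2
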